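/- (Theorem 1, reaching of the sliding mode.) Let $A_{22}$ be a real $p \times p$ matrix, $D_2$ a real $p \times h$ matrix, $S_2$ a real $(n-p) \times p$ matrix, and let $\bar{\delta} > 0$, $0 < \bar{r} < 1$, $\phi > 1$, $\eta > 0$, $\rho > 0$, $t_0 \in \mathbb{R}$. Let $\tau : [t_0,\infty) \to [0,\infty)$ be differentiable with $|\dot{\tau}(t)| \le \bar{r}$, let $x : \mathbb{R} \to \mathbb{R}^n$ be continuous, and let $\delta : \mathbb{R} \to \mathbb{R}^h$ satisfy $\|\delta(\theta)\| \le \bar{\delta}\, \|x(\theta)\|$ for all $\theta$. Assume the Razumikhin condition $\|x(t + \theta)\| \le \phi\, \|x(t)\|$ for all $t \ge t_0$ and $\theta \in [-\tau(t), 0]$, and that the switching gain dominates: $\rho \ge \phi\, \bar{\delta}\, (1 + \bar{r})\, \|S_2\|\,\| e^{A_{22}\tau(t)} D_2 \| \, \|x(t)\| + \eta$ for all $t \ge t_0$. Let $s : [t_0, \infty) \to \mathbb{R}^{n-p}$ be continuous and suppose that at every $t$ with $s(t) \ne 0$ it is differentiable with $\dot{s}(t) = S_2 (1 - \dot{\tau}(t))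 e^{A_{22}\tau(t)} D_2\, \delta(t - \tau(t)) - \rho\, \mathrm{sign}(s(t))$. Then there exists $T \in [t_0,\ t_0 + \|s(t_0)\|/\eta]$ with $s(T) = 0$: the sliding mode $s \equiv 0$ is reached in finite time. -/

import Mathlib

open Matrix
open scoped RealInnerProductSpace

/-- The componentwise sign vector: `(sign s)ᵢ = 1, -1, 0` according to
`sᵢ > 0`, `sᵢ < 0`, `sᵢ = 0`. -/
noncomputable def signVec {m : ℕ} (s : EuclideanSpace ℝ (Fin m)) : EuclideanSpace ℝ (Fin m) :=
  WithLp.toLp 2 (fun i => Real.sign (s i))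

/-- The operator norm of a real matrix viewed as a linear map between Euclidean spaces. -/
noncomputable def matOpNorm {a b : ℕ} (M : Matrix (Fin a) (Fin b) ℝ) : ℝ :=
  ‖LinearMap.toContinuousLinearMap (Matrix.toEuclideanLin M)‖

lemma mul_sign_eq_abs (a : ℝ) : a * Real.sign a = |a| := by
  rcases lt_trichotomy a 0 with h | h | h
  · rw [Real.sign_of_neg h, abs_of_neg h]; ring
  · simp [h]
  · rw [Real.sign_of_pos h, abs_of_pos h]; ring

lemma norm_le_sum_abs {m : ℕ} (v : EuclideanSpace ℝ (Fin m)) : ‖v‖ ≤ ∑ i, |v i| := by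
  rw [EuclideanSpace.norm_eq]
  have h1 : ∑ i, ‖v i‖ ^ 2 ≤ (∑ i, |v i|) ^ 2 := by
    simpa [Real.norm_eq_abs] using
      Finset.sum_sq_le_sq_sum_of_nonneg (f := fun i => |v i|) (s := Finset.univ)
        (fun i _ => abs_nonneg _)
  calc Real.sqrt (∑ i, ‖v i‖ ^ 2) ≤ Real.sqrt ((∑ i, |v i|) ^ 2) := Real.sqrt_le_sqrt h1
    _ = ∑ i, |v i| := Real.sqrt_sq (Finset.sum_nonneg fun i _ => abs_nonneg _)

lemma norm_le_inner_signVec {m : ℕ} (v : EuclideanSpace ℝ (Fin m)) : ‖v‖ ≤ ⟪v, signVec v⟫ := by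
  have h : ⟪v, signVec v⟫ = ∑ i, |v i| := by
    simp only [PiLp.inner_apply, RCLike.inner_apply, conj_trivial, signVec, PiLp.toLp_apply]
    exact Finset.sum_congr rfl fun i _ => (mul_comm _ _).trans (mul_sign_eq_abs (v i))
  rw [h]; exact norm_le_sum_abs v

lemma apply_norm_le {a b : ℕ} (M : Matrix (Fin a) (Fin b) ℝ) (v : EuclideanSpace ℝ (Fin b)) :
    ‖Matrix.toEuclideanLin M v‖ ≤ matOpNorm M * ‖v‖ := by
  simpa [matOpNorm] using (LinearMap.toContinuousLinearMap (Matrix.toEuclideanLin M)).le_opNorm v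

/-- **Theorem 1 (reaching of the sliding mode).**
Under the bounds on the delay rate, the parametric uncertainty, the Razumikhin condition,
and the switching-gain domination
`ρ ≥ φ δ̄ (1+r̄) ‖S₂‖ ‖e^{A₂₂ τ(t)} D₂‖ ‖x(t)‖ + η`, the closed-loop sliding dynamics
`ṡ = (1-τ̇) S₂ e^{A₂₂ τ} D₂ δ(t-τ) - ρ sign(s)` reach the sliding mode `s ≡ 0` in finite
time, no later than `t₀ + ‖s(t₀)‖/η`. -/
theorem sliding_mode_reached_in_finite_time {n p h : ℕ}
    (A22 : Matrix (Fin p) (Fin p) ℝ) (D2 : Matrix (Fin p) (Fin h) ℝ)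
    (S2 : Matrix (Fin (n - p)) (Fin p) ℝ)
    (δbar rbar φ η ρ t₀ : ℝ)
    (hδbar : 0 < δbar) (hrbar0 : 0 < rbar) (hrbar1 : rbar < 1)
    (hφ : 1 < φ) (hη : 0 < η) (hρ : 0 < ρ)
    (τ τ' : ℝ → ℝ)
    (hτ0 : ∀ t, t₀ ≤ t → 0 ≤ τ t)
    (hτd : ∀ t, t₀ ≤ t → HasDerivAt τ (τ' t) t)
    (hτ' : ∀ t, t₀ ≤ t → |τ' t| ≤ rbar)
    (x : ℝ → EuclideanSpace ℝ (Fin n)) (hx : Continuous x)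
    (δ : ℝ → EuclideanSpace ℝ (Fin h))
    (hδ : ∀ θ : ℝ, ‖δ θ‖ ≤ δbar * ‖x θ‖)
    (hRaz : ∀ t, t₀ ≤ t → ∀ θ ∈ Set.Icc (-τ t) (0 : ℝ), ‖x (t + θ)‖ ≤ φ * ‖x t‖)
    (hgain : ∀ t, t₀ ≤ t →
      φ * δbar * (1 + rbar) * matOpNorm S2
          * matOpNorm (NormedSpace.exp (τ t • A22) * D2) * ‖x t‖ + η ≤ ρ)
    (s : ℝ → EuclideanSpace ℝ (Fin (n - p)))
    (hscont : ContinuousOn s (Set.Ici t₀))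
    (hdyn : ∀ t, t₀ ≤ t → s t ≠ 0 → HasDerivAt s
      ((1 - τ' t) • (WithLp.equiv 2 (Fin (n - p) → ℝ)).symm
          (S2 *ᵥ (NormedSpace.exp (τ t • A22) *ᵥ (D2 *ᵥ δ (t - τ t))))
        - ρ • signVec (s t)) t) :
    ∃ T ∈ Set.Icc t₀ (t₀ + ‖s t₀‖ / η), s T = 0 := by
  classical
  set T₁ := t₀ + ‖s t₀‖ / η with hT₁def
  have hT₁ : t₀ ≤ T₁ := le_add_of_nonneg_right (div_nonneg (norm_nonneg _) hη.le)
  by_contra hcon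
  push_neg at hcon
  have hne : ∀ t ∈ Set.Icc t₀ T₁, s t ≠ 0 := hcon
  set F : ℝ → ℝ := fun u => ‖s u‖ + η * u with hFdef
  -- key derivative fact: at any admissible point, F has nonpositive derivative
  have key : ∀ t, t₀ ≤ t → s t ≠ 0 → ∃ d ≤ 0, HasDerivAt F d t := by
    intro t ht hst
    set v := s t with hv
    set E := NormedSpace.exp (τ t • A22) with hE
    set θ := t - τ t with hθ
    set ζ := (WithLp.equiv 2 (Fin (n - p) → ℝ)).symm
        (S2 *ᵥ (E *ᵥ (D2 *ᵥ δ θ))) with hζdef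
    set s' := (1 - τ' t) • ζ - ρ • signVec v with hs'def
    have hs' : HasDerivAt s s' t := hdyn t ht hst
    -- bound on ‖ζ‖
    have hζ : ζ = Matrix.toEuclideanLin S2 (Matrix.toEuclideanLin (E * D2) (δ θ)) := by
      simp only [hζdef, Matrix.toEuclideanLin_apply, Matrix.mulVec_mulVec,
        Equiv.apply_symm_apply]
      rfl
    have hNS : 0 ≤ matOpNorm S2 := norm_nonneg _
    have hNE : 0 ≤ matOpNorm (E * D2) := norm_nonneg _
    have hxθ : ‖x θ‖ ≤ φ * ‖x t‖ := by
      have := hRaz t ht (-(τ t)) ⟨le_refl _, neg_nonpos.mpr (hτ0 t ht)⟩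
      simpa [hθ, sub_eq_add_neg] using this
    have hδθ : ‖δ θ‖ ≤ δbar * (φ * ‖x t‖) :=
      (hδ θ).trans (mul_le_mul_of_nonneg_left hxθ hδbar.le)
    set B : ℝ := matOpNorm S2 * (matOpNorm (E * D2) * (δbar * (φ * ‖x t‖))) with hBdef
    have hζn : ‖ζ‖ ≤ B := by
      rw [hζ]
      calc ‖Matrix.toEuclideanLin S2 (Matrix.toEuclideanLin (E * D2) (δ θ))‖
          ≤ matOpNorm S2 * ‖Matrix.toEuclideanLin (E * D2) (δ θ)‖ := apply_norm_le _ _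
        _ ≤ matOpNorm S2 * (matOpNorm (E * D2) * ‖δ θ‖) :=
            mul_le_mul_of_nonneg_left (apply_norm_le _ _) hNS
        _ ≤ B := by
            rw [hBdef]
            exact mul_le_mul_of_nonneg_left
              (mul_le_mul_of_nonneg_left hδθ hNE) hNS
    have hB0 : 0 ≤ B := by positivity
    have hBρ : (1 + rbar) * B ≤ ρ - η := by
      have hg := hgain t ht
      have heq : (1 + rbar) * B
          = φ * δbar * (1 + rbar) * matOpNorm S2 * matOpNorm (E * D2) * ‖x t‖ := by
        rw [hBdef]; ring
      linarith
    -- inner product bound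
    have hinner : ⟪v, s'⟫ ≤ -η * ‖v‖ := by
      have h1 : ⟪v, s'⟫ = (1 - τ' t) * ⟪v, ζ⟫ - ρ * ⟪v, signVec v⟫ := by
        rw [hs'def, inner_sub_right, real_inner_smul_right, real_inner_smul_right]
      have h2 : (1 - τ' t) * ⟪v, ζ⟫ ≤ (1 + rbar) * (B * ‖v‖) := by
        calc (1 - τ' t) * ⟪v, ζ⟫ ≤ |1 - τ' t| * |⟪v, ζ⟫| := by
              rw [← abs_mul]; exact le_abs_self _
          _ ≤ (1 + rbar) * (B * ‖v‖) := by
              apply mul_le_mul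
              · have := hτ' t ht
                calc |1 - τ' t| ≤ |(1:ℝ)| + |τ' t| := abs_sub _ _
                  _ ≤ 1 + rbar := by rw [abs_one]; linarith
              · calc |⟪v, ζ⟫| ≤ ‖v‖ * ‖ζ‖ := abs_real_inner_le_norm v ζ
                  _ ≤ B * ‖v‖ := by
                      rw [mul_comm]
                      exact mul_le_mul_of_nonneg_right hζn (norm_nonneg _)
              · exact abs_nonneg _
              · linarith [hrbar0]
      have h3 : ρ * ‖v‖ ≤ ρ * ⟪v, signVec v⟫ :=
        mul_le_mul_of_nonneg_left (norm_le_inner_signVec v) hρ.le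
      have h4 : (1 + rbar) * (B * ‖v‖) ≤ (ρ - η) * ‖v‖ := by
        rw [← mul_assoc]
        exact mul_le_mul_of_nonneg_right hBρ (norm_nonneg _)
      rw [h1]
      nlinarith [norm_nonneg v]
    -- derivative of the norm
    have hvpos : (0:ℝ) < ‖v‖ := norm_pos_iff.mpr hst
    have hip : HasDerivAt (fun u => (⟪s u, s u⟫ : ℝ)) (⟪v, s'⟫ + ⟪s', v⟫) t :=
      HasDerivAt.inner ℝ hs' hs'
    have hippos : (0:ℝ) < ⟪v, v⟫ := by
      rw [real_inner_self_eq_norm_sq]; exact pow_pos hvpos 2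
    have hsqrt := (Real.hasDerivAt_sqrt hippos.ne').comp t hip
    have heqf : (fun u => Real.sqrt ⟪s u, s u⟫) = fun u => ‖s u‖ := by
      funext u
      rw [real_inner_self_eq_norm_sq, Real.sqrt_sq (norm_nonneg _)]
    simp only [Function.comp_def] at hsqrt
    rw [heqf] at hsqrt
    set d : ℝ := 1 / (2 * Real.sqrt ⟪v, v⟫) * (⟪v, s'⟫ + ⟪s', v⟫) with hddef
    have hdval : d = ⟪v, s'⟫ / ‖v‖ := by
      rw [hddef, real_inner_comm s' v]
      rw [show Real.sqrt ⟪v, v⟫ = ‖v‖ by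
        rw [real_inner_self_eq_norm_sq, Real.sqrt_sq (norm_nonneg _)]]
      field_simp
      ring
    have hdle : d ≤ -η := by
      rw [hdval, div_le_iff₀ hvpos]
      linarith [hinner]
    refine ⟨d + η, by linarith, ?_⟩
    have hlin : HasDerivAt (fun u : ℝ => η * u) η t := by
      simpa using (hasDerivAt_id t).const_mul η
    exact hsqrt.add hlin
  -- antitone argument
  have hFc : ContinuousOn F (Set.Icc t₀ T₁) :=
    ((hscont.mono (Set.Icc_subset_Ici_self)).norm).add
      ((continuous_const.mul continuous_id).continuousOn)
  have hmem : ∀ u ∈ interior (Set.Icc t₀ T₁), ∃ d ≤ 0, HasDerivAt F d u := by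
    intro u hu
    rw [interior_Icc] at hu
    exact key u hu.1.le (hne u ⟨hu.1.le, hu.2.le⟩)
  have hdiff : DifferentiableOn ℝ F (interior (Set.Icc t₀ T₁)) := by
    intro u hu
    obtain ⟨d, _, hF⟩ := hmem u hu
    exact hF.differentiableAt.differentiableWithinAt
  have hd0 : ∀ u ∈ interior (Set.Icc t₀ T₁), deriv F u ≤ 0 := by
    intro u hu
    obtain ⟨d, hd, hF⟩ := hmem u hu
    rw [hF.deriv]; exact hd
  have hant := antitoneOn_of_deriv_nonpos (convex_Icc t₀ T₁) hFc hdiff hd0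
  have hFT : F T₁ ≤ F t₀ :=
    hant (Set.left_mem_Icc.mpr hT₁) (Set.right_mem_Icc.mpr hT₁) hT₁
  have hηT : η * T₁ = η * t₀ + ‖s t₀‖ := by
    rw [hT₁def]; field_simp
  have hsT : ‖s T₁‖ ≤ 0 := by
    simp only [hFdef] at hFT
    linarith
  exact hne T₁ (Set.right_mem_Icc.mpr hT₁) (norm_le_zero_iff.mp hsT)
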